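/- For a framed weak f-structure (f, Q, ξ_i, η^i) on a smooth manifold M of dimension 2n+p, the following identities hold: f ξ_i = 0 and η^i ∘ f = 0 for all 1 ≤ i ≤ p, and Q ∘ f = f ∘ Q (i.e., the tensors Q and f commute). -/
import Mathlib


/-!
An algebraic model of a framed weak `f`-structure `(f, Q, ξ_i, η^i)` on a smooth
manifold `M^{2n+p}` (Rovenski–Wolak): `F` plays the role of the commutative ring
`C^∞(M)` of smooth functions and `V` the `F`-module `𝔛(M)` of smooth vector fields.
The data are a `(1,1)`-tensor field `f` of rank `2n`, a nonsingular `(1,1)`-tensor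
field `Q`, vector fields `ξ_1, …, ξ_p` spanning `ker f`, and the dual `1`-forms
`η^1, …, η^p`, satisfying `f³ + f∘Q = 0`, `Q ξᵢ = ξᵢ`, `f² = -Q + Σᵢ ηⁱ ⊗ ξᵢ`
and `ηⁱ(ξⱼ) = δⁱⱼ`.
-/

structure FramedWeakFStructure (p : ℕ) (F V : Type*) [CommRing F]
    [AddCommGroup V] [Module F V] where
  f : V →ₗ[F] V
  Q : V →ₗ[F] V
  ξ : Fin p → V
  η : Fin p → V →ₗ[F] F
  Q_nonsingular : Function.Bijective Q
  f_cubed : ∀ X, f (f (f X)) + f (Q X) = 0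
  Q_xi : ∀ i, Q (ξ i) = ξ i
  f_squared : ∀ X, f (f X) = -Q X + ∑ i, η i X • ξ i
  eta_xi : ∀ i j, η i (ξ j) = if i = j then (1 : F) else 0
  /-- the `ηⁱ` are the coframe dual to the `ξᵢ` w.r.t. the splitting
  `TM = f(TM) ⊕ ker f`. -/
  eta_Q : ∀ i X, η i (Q X) = η i X
  /-- the `ξᵢ` span `ker f` -/
  ker_f_spanned : ∀ X, f X = 0 → X ∈ Submodule.span F (Set.range ξ)

/-- For a framed weak `f`-structure `(f, Q, ξᵢ, ηⁱ)` on `M^{2n+p}`: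
`f ξᵢ = 0` and `ηⁱ ∘ f = 0` for all `1 ≤ i ≤ p`, and `Q ∘ f = f ∘ Q`. -/
theorem framedWeakFStructure_identities {p : ℕ} {F V : Type*} [CommRing F]
    [AddCommGroup V] [Module F V] (S : FramedWeakFStructure p F V) :
    (∀ i : Fin p, S.f (S.ξ i) = 0) ∧
    (∀ (i : Fin p) (X : V), S.η i (S.f X) = 0) ∧
    (∀ X : V, S.Q (S.f X) = S.f (S.Q X)) := by
  -- f³X = -f(QX)
  have hf3 : ∀ X : V, S.f (S.f (S.f X)) = -S.f (S.Q X) := fun X =>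
    eq_neg_of_add_eq_zero_left (S.f_cubed X)
  -- key: ∑ ηⁱ(X) • f ξᵢ = 0
  have hkey : ∀ X : V, ∑ i, S.η i X • S.f (S.ξ i) = 0 := by
    intro X
    have h := congrArg S.f (S.f_squared X)
    rw [map_add, map_neg, map_sum] at h
    simp only [map_smul] at h
    rw [hf3 X] at h
    exact (left_eq_add.mp h)
  -- f ξᵢ = 0
  have hfxi : ∀ i : Fin p, S.f (S.ξ i) = 0 := by
    intro i
    have h := hkey (S.ξ i)
    simp [S.eta_xi, ite_smul] at h
    exact h
  -- main equation: -Q(fX) + ∑ ηⁱ(fX) • ξᵢ = -f(QX)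
  have heq : ∀ X : V, -S.Q (S.f X) + ∑ i, S.η i (S.f X) • S.ξ i = -S.f (S.Q X) := by
    intro X
    rw [← S.f_squared (S.f X), hf3 X]
  -- ηʲ(f(QX)) = 0
  have hQ0 : ∀ (j : Fin p) (X : V), S.η j (S.f (S.Q X)) = 0 := by
    intro j X
    have h := congrArg (S.η j) (heq X)
    rw [map_add, map_neg, map_neg, S.eta_Q, map_sum] at h
    simp [S.eta_xi, mul_ite] at h
    exact h
  -- ηʲ(fX) = 0 by surjectivity of Q
  have heta : ∀ (j : Fin p) (X : V), S.η j (S.f X) = 0 := by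
    intro j X
    obtain ⟨Y, rfl⟩ := S.Q_nonsingular.2 X
    exact hQ0 j Y
  refine ⟨hfxi, heta, fun X => ?_⟩
  have h := heq X
  simp only [heta, zero_smul, Finset.sum_const_zero, add_zero] at h
  exact neg_injective h
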